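/- Let F_q be a finite field and A, B ⊆ F_q with |A|·|B| > q. Then there exists ξ ∈ F_q* such that both sets A + ξB = {a + ξb : a ∈ A, b ∈ B} and A − ξB = {a − ξb : a ∈ A, b ∈ B} have cardinality strictly greater than q/2. -/

import Mathlib

open Finset

private lemma cs_fiber {α β : Type*} [DecidableEq α] [DecidableEq β] (s : Finset α) (f : α → β) :
    s.card ^ 2 ≤ (s.image f).card * ((s ×ˢ s).filter fun p => f p.1 = f p.2).card := by
  have h1 : s.card = ∑ x ∈ s.image f, (s.filter fun a => f a = x).card :=
    card_eq_sum_card_image f s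
  have h2 : ((s ×ˢ s).filter fun p => f p.1 = f p.2).card
      = ∑ x ∈ s.image f, ((s.filter fun a => f a = x).card) ^ 2 := by
    rw [card_eq_sum_card_fiberwise (f := fun p : α × α => f p.1) (t := s.image f)
      (fun p hp => by
        simp only [mem_coe, mem_filter, mem_product] at hp
        exact mem_image_of_mem f hp.1.1)]
    refine sum_congr rfl fun x hx => ?_
    have hset : (((s ×ˢ s).filter fun p => f p.1 = f p.2).filter fun p => f p.1 = x)
        = (s.filter fun a => f a = x) ×ˢ (s.filter fun a => f a = x) := by
      ext ⟨u, v⟩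
      simp only [mem_filter, mem_product]
      constructor
      · rintro ⟨⟨⟨hu, hv⟩, he⟩, hx'⟩
        exact ⟨⟨hu, hx'⟩, hv, he.symm.trans hx'⟩
      · rintro ⟨⟨hu, hux⟩, hv, hvx⟩
        exact ⟨⟨⟨hu, hv⟩, hux.trans hvx.symm⟩, hux⟩
    rw [hset, card_product, sq]
  rw [← Nat.cast_le (α := ℚ)]
  push_cast
  rw [h1, h2]
  push_cast
  exact sq_sum_le_card_mul_sum_sq

set_option maxHeartbeats 1600000 in
theorem stmt_2 {F : Type*} [Field F] [Fintype F] [DecidableEq F] (q : ℕ)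
    (hq : Fintype.card F = q) (A B : Finset F) (h : q < A.card * B.card) :
    ∃ ξ : F, ξ ≠ 0 ∧
      (q : ℚ) / 2 < (((A ×ˢ B).image (fun p => p.1 + ξ * p.2)).card : ℚ) ∧
      (q : ℚ) / 2 < (((A ×ˢ B).image (fun p => p.1 - ξ * p.2)).card : ℚ) := by
  classical
  have hq1 : 1 ≤ q := hq ▸ Fintype.card_pos
  have hA : A.Nonempty := by
    rw [← card_pos]
    by_contra hc
    push_neg at hc
    interval_cases hA : A.card <;> omega
  have hB : B.Nonempty := by
    rw [← card_pos]
    by_contra hc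
    push_neg at hc
    interval_cases hB : B.card <;> omega
  by_cases hq3 : q ≤ 3
  · -- small case: use ξ = 1, both images have ≥ 2 elements
    have h2 : 2 ≤ A.card ∨ 2 ≤ B.card := by
      by_contra hc
      push_neg at hc
      have := Nat.mul_le_mul (show A.card ≤ 1 by omega) (show B.card ≤ 1 by omega)
      omega
    have key : ∀ f : F × F → F, (∀ a₁ a₂ b, a₁ ≠ a₂ → f (a₁, b) ≠ f (a₂, b)) →
        (∀ a b₁ b₂, b₁ ≠ b₂ → f (a, b₁) ≠ f (a, b₂)) →
        (q : ℚ) / 2 < (((A ×ˢ B).image f).card : ℚ) := by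
      intro f hf1 hf2
      have hcard : 1 < ((A ×ˢ B).image f).card := by
        rcases h2 with h2 | h2
        · obtain ⟨a₁, ha₁, a₂, ha₂, hne⟩ := one_lt_card.mp h2
          obtain ⟨b, hb⟩ := hB
          exact one_lt_card.mpr ⟨f (a₁, b),
            mem_image_of_mem f (mem_product.mpr ⟨ha₁, hb⟩), f (a₂, b),
            mem_image_of_mem f (mem_product.mpr ⟨ha₂, hb⟩), hf1 _ _ _ hne⟩
        · obtain ⟨b₁, hb₁, b₂, hb₂, hne⟩ := one_lt_card.mp h2
          obtain ⟨a, ha⟩ := hA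
          exact one_lt_card.mpr ⟨f (a, b₁),
            mem_image_of_mem f (mem_product.mpr ⟨ha, hb₁⟩), f (a, b₂),
            mem_image_of_mem f (mem_product.mpr ⟨ha, hb₂⟩), hf2 _ _ _ hne⟩
      have h2' : (2 : ℚ) ≤ (((A ×ˢ B).image f).card : ℚ) := by exact_mod_cast hcard
      have hq3' : (q : ℚ) ≤ 3 := by exact_mod_cast hq3
      linarith
    refine ⟨1, one_ne_zero, ?_, ?_⟩
    · refine key _ (fun a₁ a₂ b hne => ?_) (fun a b₁ b₂ hne => ?_)
      · simpa using hne
      · simpa using hne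
    · refine key _ (fun a₁ a₂ b hne => ?_) (fun a b₁ b₂ hne => ?_)
      · simpa using hne
      · simpa using hne
  · -- main case : q ≥ 4
    push_neg at hq3
    obtain ⟨r, hqr, hr2⟩ : ∃ r, q = r + 2 ∧ 2 ≤ r := ⟨q - 2, by omega, by omega⟩
    set S := A ×ˢ B with hSdef
    set K := A.card * B.card with hKdef
    have hScard : S.card = K := card_product _ _
    have hK0 : 0 < K := by omega
    set Ep : F → ℕ := fun ξ =>
      ((S ×ˢ S).filter fun p => p.1.1 + ξ * p.1.2 = p.2.1 + ξ * p.2.2).card with hEpdef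
    set T : Finset F := Finset.univ.erase (0 : F) with hTdef
    have hTcard : T.card = r + 1 := by
      rw [hTdef, card_erase_of_mem (mem_univ _), card_univ, hq]
      omega
    have hTne : T.Nonempty := by
      rw [← card_pos, hTcard]; omega
    -- bound on the sum of collision counts
    have hsum : ∑ ξ ∈ T, Ep ξ ≤ K * K + r * K := by
      have e1 : ∑ ξ ∈ T, Ep ξ = ∑ p ∈ S ×ˢ S,
          (T.filter fun ξ => p.1.1 + ξ * p.1.2 = p.2.1 + ξ * p.2.2).card := by
        simp only [hEpdef, card_filter]
        exact Finset.sum_comm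
      have e2 : ∀ p ∈ S ×ˢ S,
          (T.filter fun ξ => p.1.1 + ξ * p.1.2 = p.2.1 + ξ * p.2.2).card
            ≤ 1 + if p.1 = p.2 then r else 0 := by
        rintro ⟨⟨a, b⟩, a', b'⟩ _
        by_cases hd : ((a, b) : F × F) = (a', b')
        · simp only [hd, if_pos]
          calc (T.filter fun ξ => (a, b).1 + ξ * (a, b).2 = a' + ξ * b').card
              ≤ T.card := card_filter_le _ _
            _ = r + 1 := hTcard
            _ ≤ 1 + r := by omega
        · have hle1 : (T.filter fun ξ => a + ξ * b = a' + ξ * b').card ≤ 1 := by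
            refine card_le_one.mpr fun ξ₁ h1 ξ₂ h2 => ?_
            simp only [mem_filter] at h1 h2
            by_contra hne
            apply hd
            have hbb : (ξ₁ - ξ₂) * (b - b') = 0 := by linear_combination h1.2 - h2.2
            rcases mul_eq_zero.mp hbb with hz | hz
            · exact absurd (sub_eq_zero.mp hz) hne
            · have hb' : b = b' := sub_eq_zero.mp hz
              have ha' : a = a' := by
                have := h1.2
                rw [hb'] at this
                exact add_right_cancel this
              rw [ha', hb']
          simp only [hd, if_neg, if_false]
          simpa using hle1
      rw [e1]
      calc ∑ p ∈ S ×ˢ S, (T.filter fun ξ => p.1.1 + ξ * p.1.2 = p.2.1 + ξ * p.2.2).card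
          ≤ ∑ p ∈ S ×ˢ S, (1 + if p.1 = p.2 then r else 0) := sum_le_sum e2
        _ = (S ×ˢ S).card + ∑ p ∈ S ×ˢ S, (if p.1 = p.2 then r else 0) := by
            rw [sum_add_distrib, sum_const, smul_eq_mul, mul_one]
        _ = K * K + ∑ u ∈ S, ∑ v ∈ S, (if u = v then r else 0) := by
            rw [card_product, hScard, Finset.sum_product]
        _ = K * K + ∑ u ∈ S, r := by
            congr 1
            refine sum_congr rfl fun u hu => ?_
            rw [Finset.sum_ite_eq S u (fun _ => r), if_pos hu]
        _ = K * K + r * K := by rw [sum_const, smul_eq_mul, hScard]; ring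
    -- pick the minimizing nonzero ξ
    obtain ⟨ξ₀, hξ₀T, hmin⟩ := exists_min_image T Ep hTne
    have hξ₀ : ξ₀ ≠ 0 := (mem_erase.mp hξ₀T).1
    have hmain : (r + 1) * Ep ξ₀ ≤ K * K + r * K := by
      calc (r + 1) * Ep ξ₀ = T.card • Ep ξ₀ := by rw [hTcard, smul_eq_mul]
        _ ≤ ∑ ξ ∈ T, Ep ξ := T.card_nsmul_le_sum Ep _ (fun ξ hξ => hmin ξ hξ)
        _ ≤ K * K + r * K := hsum
    -- Cauchy–Schwarz for both signs
    have hcsP : K ^ 2 ≤ (S.image fun p : F × F => p.1 + ξ₀ * p.2).card * Ep ξ₀ := by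
      have := cs_fiber S (fun p : F × F => p.1 + ξ₀ * p.2)
      rwa [hScard] at this
    have hswap : ((S ×ˢ S).filter fun p =>
        p.1.1 - ξ₀ * p.1.2 = p.2.1 - ξ₀ * p.2.2).card = Ep ξ₀ := by
      refine card_nbij' (fun p => ((p.1.1, p.2.2), (p.2.1, p.1.2)))
        (fun p => ((p.1.1, p.2.2), (p.2.1, p.1.2))) ?_ ?_ ?_ ?_
      · rintro ⟨⟨a, b⟩, a', b'⟩ hp
        change _ ∈ Finset.filter _ _ at hp ⊢
        simp only [hSdef, mem_filter, mem_product] at hp ⊢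
        obtain ⟨⟨⟨ha, hb⟩, ha', hb'⟩, he⟩ := hp
        exact ⟨⟨⟨ha, hb'⟩, ha', hb⟩, by linear_combination he⟩
      · rintro ⟨⟨a, b⟩, a', b'⟩ hp
        change _ ∈ Finset.filter _ _ at hp ⊢
        simp only [hSdef, mem_filter, mem_product] at hp ⊢
        obtain ⟨⟨⟨ha, hb⟩, ha', hb'⟩, he⟩ := hp
        exact ⟨⟨⟨ha, hb'⟩, ha', hb⟩, by linear_combination he⟩
      · rintro ⟨⟨a, b⟩, a', b'⟩ _; rfl
      · rintro ⟨⟨a, b⟩, a', b'⟩ _; rfl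
    have hcsM : K ^ 2 ≤ (S.image fun p : F × F => p.1 - ξ₀ * p.2).card * Ep ξ₀ := by
      have := cs_fiber S (fun p : F × F => p.1 - ξ₀ * p.2)
      rwa [hScard, hswap] at this
    -- pass to ℚ and finish
    have hNP : 0 < (S.image fun p : F × F => p.1 + ξ₀ * p.2).card :=
      card_pos.mpr ((hA.product hB).image _)
    have hNM : 0 < (S.image fun p : F × F => p.1 - ξ₀ * p.2).card :=
      card_pos.mpr ((hA.product hB).image _)
    have hE0 : 0 < Ep ξ₀ := by
      rcases Nat.eq_zero_or_pos (Ep ξ₀) with h0 | h0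
      · rw [h0, mul_zero] at hcsP
        have : 0 < K ^ 2 := by positivity
        omega
      · exact h0
    have final : ∀ N : ℕ, K ^ 2 ≤ N * Ep ξ₀ → (q : ℚ) / 2 < (N : ℚ) := by
      intro N hcs
      have hrQ : (2 : ℚ) ≤ (r : ℚ) := by exact_mod_cast hr2
      have hKQ : ((r : ℚ) + 2) < (K : ℚ) := by
        have : q < K := h
        have : (q : ℚ) < (K : ℚ) := by exact_mod_cast this
        rw [hqr] at this
        push_cast at this
        linarith
      have hK0Q : (0 : ℚ) < (K : ℚ) := by positivity
      have hmQ : ((r : ℚ) + 1) * (Ep ξ₀ : ℚ) ≤ (K : ℚ) * K + r * K := by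
        exact_mod_cast hmain
      have hcsQ : (K : ℚ) ^ 2 ≤ (N : ℚ) * (Ep ξ₀ : ℚ) := by exact_mod_cast hcs
      have hE0Q : (0 : ℚ) < (Ep ξ₀ : ℚ) := by exact_mod_cast hE0
      have hNQ : (0 : ℚ) < (N : ℚ) := by
        rcases Nat.eq_zero_or_pos N with h0 | h0
        · rw [h0] at hcs; simp at hcs; omega
        · exact_mod_cast h0
      -- step 1 : q * E < 2 * K^2
      have step1 : ((r : ℚ) + 2) * (Ep ξ₀ : ℚ) < 2 * (K : ℚ) ^ 2 := by
        have key : ((r : ℚ) + 1) * (((r : ℚ) + 2) * (Ep ξ₀ : ℚ))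
            < ((r : ℚ) + 1) * (2 * (K : ℚ) ^ 2) := by
          nlinarith [mul_le_mul_of_nonneg_left hmQ (show (0:ℚ) ≤ (r:ℚ) + 2 by linarith),
            mul_pos (mul_pos (show (0:ℚ) < (r:ℚ) by linarith) hK0Q)
              (show (0:ℚ) < (K:ℚ) - ((r:ℚ) + 2) by linarith)]
        exact lt_of_mul_lt_mul_left key (by linarith)
      -- step 2 : q < 2 * N
      have step2 : ((r : ℚ) + 2) * (K : ℚ) ^ 2 < 2 * (N : ℚ) * (K : ℚ) ^ 2 := by
        nlinarith [mul_le_mul_of_nonneg_left hcsQ (show (0:ℚ) ≤ (r:ℚ) + 2 by linarith),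
          mul_lt_mul_of_pos_left step1 hNQ]
      have hq2N : ((r : ℚ) + 2) < 2 * (N : ℚ) :=
        lt_of_mul_lt_mul_right step2 (by positivity)
      have : (q : ℚ) = (r : ℚ) + 2 := by rw [hqr]; push_cast; ring
      rw [this]
      linarith
    exact ⟨ξ₀, hξ₀, final _ hcsP, final _ hcsM⟩
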